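/- s-efficiency of the Shapley Taylor Interaction Index: let d ≥ 1 and s₀ ≥ 1, and define the STI top-order weights m(t) := s₀ · (d − t − 1)! · t! / d!. Then for every T ⊆ Fin d with s₀ ≤ |T| ≤ d − s₀, Σ_{S ⊆ Fin d, |S| = s₀} (−1)^{s₀ − |T ∩ S|} · m(|T| − |T ∩ S|) = 0. -/
import Mathlib

/-- Key ratio identity between consecutive terms, purely in `ℕ`. -/
lemma sti_ratio_id (t e s₀ n : ℕ) (hn : n < s₀) (hst : s₀ ≤ t) (hse : s₀ ≤ e) :
    (n+1) * ((e - s₀ + n + 1) *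
      (t.choose (n+1) * (e.choose (s₀-n-1) * ((e+n).factorial * (t-n-1).factorial)))) =
    (s₀-n) * ((e+n) *
      (t.choose n * (e.choose (s₀-n) * ((e+n-1).factorial * (t-n).factorial)))) := by
  have h1 : t.choose (n+1) * (n+1) = t.choose n * (t - n) := Nat.choose_succ_right_eq t n
  have h2 : e.choose ((s₀-n-1)+1) * ((s₀-n-1)+1) = e.choose (s₀-n-1) * (e - (s₀-n-1)) :=
    Nat.choose_succ_right_eq e (s₀-n-1)
  have e3 : (s₀-n-1)+1 = s₀ - n := by omega
  have e4 : e - (s₀-n-1) = e - s₀ + n + 1 := by omega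
  rw [e3, e4] at h2
  have h5 : (e+n).factorial = (e+n) * (e+n-1).factorial := by
    have h : e + n = (e+n-1)+1 := by omega
    rw [h, Nat.factorial_succ, ← h]
  have h6 : (t-n).factorial = (t-n) * (t-n-1).factorial := by
    have h : t - n = (t-n-1)+1 := by omega
    rw [h, Nat.factorial_succ, ← h]
  calc (n+1) * ((e - s₀ + n + 1) *
      (t.choose (n+1) * (e.choose (s₀-n-1) * ((e+n).factorial * (t-n-1).factorial))))
      = (t.choose (n+1) * (n+1)) * ((e.choose (s₀-n-1) * (e - s₀ + n + 1)) *
          ((e+n).factorial * (t-n-1).factorial)) := by ring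
    _ = (t.choose n * (t-n)) * ((e.choose (s₀-n) * (s₀-n)) *
          (((e+n) * (e+n-1).factorial) * (t-n-1).factorial)) := by rw [h1, ← h2, h5]
    _ = (s₀-n) * ((e+n) * (t.choose n * (e.choose (s₀-n) *
          ((e+n-1).factorial * ((t-n) * (t-n-1).factorial))))) := by ring
    _ = _ := by rw [← h6]

/-- Telescoped closed form for the partial sums. -/
lemma sti_partial_sums (t e s₀ : ℕ) (hst : s₀ ≤ t) (hse : s₀ ≤ e) :
    ∀ n ≤ s₀,
      ((e:ℝ) * s₀) * ∑ k ∈ Finset.range n, (-1:ℝ)^(s₀-k) *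
        ((t.choose k * (e.choose (s₀-k) * ((e+k-1).factorial * (t-k).factorial)) : ℕ) : ℝ)
      = -((n * (e - s₀ + n) : ℕ) : ℝ) * (-1:ℝ)^(s₀-n) *
        ((t.choose n * (e.choose (s₀-n) * ((e+n-1).factorial * (t-n).factorial)) : ℕ) : ℝ) := by
  intro n hn
  induction n with
  | zero => simp
  | succ m ih =>
    have hm : m < s₀ := hn
    rw [Finset.sum_range_succ, mul_add, ih hm.le]
    have hsgn : (-1:ℝ)^(s₀-m) = -(-1:ℝ)^(s₀-(m+1)) := by
      have h4 : s₀ - m = (s₀ - (m+1)) + 1 := by omega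
      rw [h4, pow_succ]; ring
    have h' := congrArg (Nat.cast (R := ℝ)) (sti_ratio_id t e s₀ m hm hst hse)
    push_cast [Nat.cast_sub hse, Nat.cast_sub hm.le] at h'
    have e1 : e + (m+1) - 1 = e + m := by omega
    have e2 : t - (m+1) = t - m - 1 := by omega
    have e3 : s₀ - (m+1) = s₀ - m - 1 := by omega
    rw [hsgn, e1, e2, e3]
    push_cast [Nat.cast_sub hse, Nat.cast_sub hm.le]
    linear_combination ((-1:ℝ)^(s₀ - m - 1)) * h'

/-- The grouped single-variable sum vanishes. -/
lemma sti_sum_zero (t e s₀ : ℕ) (hs : 1 ≤ s₀) (hst : s₀ ≤ t) (hse : s₀ ≤ e) :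
    ∑ k ∈ Finset.range (s₀+1), (-1:ℝ)^(s₀-k) *
        ((t.choose k * (e.choose (s₀-k) * ((e+k-1).factorial * (t-k).factorial)) : ℕ) : ℝ) = 0 := by
  have h := sti_partial_sums t e s₀ hst hse s₀ le_rfl
  have he : (0:ℝ) < (e:ℝ) * s₀ := by
    have : 0 < e := lt_of_lt_of_le hs hse
    positivity
  rw [Finset.sum_range_succ]
  apply mul_left_cancel₀ (ne_of_gt he)
  rw [mul_add, h, mul_zero]
  have hco : e - s₀ + s₀ = e := by omega
  rw [hco]
  simp only [Nat.sub_self, pow_zero, one_mul]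
  push_cast
  ring

/-- s-efficiency of the Shapley Taylor Interaction Index (part of Theorem 5 of SHAP-IQ):
for `s₀ ≤ |T| ≤ d − s₀` the STI top-order full-powerset weights over all `S` of size
`s₀` sum to zero. -/
theorem sti_s_efficient
    (d s₀ : ℕ) (hd : 1 ≤ d) (hs : 1 ≤ s₀) (T : Finset (Fin d))
    (h1 : s₀ ≤ T.card) (h2 : T.card ≤ d - s₀) :
    ∑ S ∈ Finset.powersetCard s₀ (Finset.univ : Finset (Fin d)),
      (-1 : ℝ) ^ (s₀ - (T ∩ S).card) *
        ((s₀ : ℝ) * (Nat.factorial (d - (T.card - (T ∩ S).card) - 1) : ℝ) *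
          (Nat.factorial (T.card - (T ∩ S).card) : ℝ) / (Nat.factorial d : ℝ)) = 0 := by
  classical
  set t := T.card with ht
  have htd : t ≤ d := by
    have := Finset.card_le_univ T
    simpa using this
  have hse : s₀ ≤ d - t := by omega
  set F : ℕ → ℝ := fun k => (-1 : ℝ) ^ (s₀ - k) *
      ((s₀ : ℝ) * (Nat.factorial (d - (t - k) - 1) : ℝ) *
        (Nat.factorial (t - k) : ℝ) / (Nat.factorial d : ℝ)) with hF
  have step1 : ∑ S ∈ Finset.powersetCard s₀ (Finset.univ : Finset (Fin d)),
      F ((T ∩ S).card)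
      = ∑ x ∈ (Finset.range (s₀+1)).sigma
          (fun k => Finset.powersetCard k T ×ˢ Finset.powersetCard (s₀-k) Tᶜ), F x.1 := by
    apply Finset.sum_nbij' (i := fun S => ⟨(T ∩ S).card, (T ∩ S, S \ T)⟩)
      (j := fun x => x.2.1 ∪ x.2.2)
    · intro S hS
      rw [Finset.mem_powersetCard] at hS
      obtain ⟨-, hcard⟩ := hS
      have hsub : (T ∩ S).card ≤ s₀ := by
        rw [← hcard]; exact Finset.card_le_card (Finset.inter_subset_right)
      have hsd : (S ∩ T).card + (S \ T).card = S.card := Finset.card_inter_add_card_sdiff S T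
      rw [Finset.inter_comm S T] at hsd
      refine Finset.mem_sigma.mpr ⟨Finset.mem_range.mpr
          (show (T ∩ S).card < s₀ + 1 by omega),
        Finset.mem_product.mpr ⟨Finset.mem_powersetCard.mpr ⟨Finset.inter_subset_left, rfl⟩,
          Finset.mem_powersetCard.mpr ⟨?_,
            show (S \ T).card = s₀ - (T ∩ S).card by omega⟩⟩⟩
      intro x hx
      simp only [Finset.mem_sdiff] at hx
      simpa [Finset.mem_compl] using hx.2
    · rintro ⟨k, A, B⟩ hx
      simp only [Finset.mem_sigma, Finset.mem_range, Finset.mem_product,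
        Finset.mem_powersetCard] at hx
      obtain ⟨hk, ⟨hAT, hA⟩, hBT, hB⟩ := hx
      rw [Finset.mem_powersetCard]
      constructor
      · exact Finset.subset_univ _
      · have hdisj : Disjoint A B := by
          refine Finset.disjoint_left.mpr fun a ha hb => ?_
          have := hBT hb
          simp only [Finset.mem_compl] at this
          exact this (hAT ha)
        rw [Finset.card_union_of_disjoint hdisj, hA, hB]
        omega
    · intro S hS
      simp only
      ext a
      simp only [Finset.mem_union, Finset.mem_inter, Finset.mem_sdiff]
      tauto
    · rintro ⟨k, A, B⟩ hx
      simp only [Finset.mem_sigma, Finset.mem_range, Finset.mem_product,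
        Finset.mem_powersetCard] at hx
      obtain ⟨hk, ⟨hAT, hA⟩, hBT, hB⟩ := hx
      have hBnT : ∀ b ∈ B, b ∉ T := by
        intro b hb
        have := hBT hb
        simpa [Finset.mem_compl] using this
      have hint : T ∩ (A ∪ B) = A := by
        ext a
        simp only [Finset.mem_inter, Finset.mem_union]
        constructor
        · rintro ⟨haT, ha | hb⟩
          · exact ha
          · exact absurd haT (hBnT a hb)
        · intro ha; exact ⟨hAT ha, Or.inl ha⟩
      have hsdiff : (A ∪ B) \ T = B := by
        ext a
        simp only [Finset.mem_sdiff, Finset.mem_union]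
        constructor
        · rintro ⟨ha | hb, hnT⟩
          · exact absurd (hAT ha) hnT
          · exact hb
        · intro hb; exact ⟨Or.inr hb, hBnT a hb⟩
      simp only [hint, hsdiff, hA]
    · intro S hS
      rfl
  have step2 : ∑ x ∈ (Finset.range (s₀+1)).sigma
          (fun k => Finset.powersetCard k T ×ˢ Finset.powersetCard (s₀-k) Tᶜ), F x.1
      = ∑ k ∈ Finset.range (s₀+1), ((t.choose k * (d-t).choose (s₀-k) : ℕ) : ℝ) * F k := by
    rw [Finset.sum_sigma]
    refine Finset.sum_congr rfl fun k hk => ?_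
    dsimp only
    rw [Finset.sum_const, Finset.card_product, Finset.card_powersetCard,
      Finset.card_powersetCard, Finset.card_compl, Fintype.card_fin]
    push_cast [nsmul_eq_mul]
    ring
  calc ∑ S ∈ Finset.powersetCard s₀ (Finset.univ : Finset (Fin d)),
      (-1 : ℝ) ^ (s₀ - (T ∩ S).card) *
        ((s₀ : ℝ) * (Nat.factorial (d - (t - (T ∩ S).card) - 1) : ℝ) *
          (Nat.factorial (t - (T ∩ S).card) : ℝ) / (Nat.factorial d : ℝ))
      = ∑ k ∈ Finset.range (s₀+1), ((t.choose k * (d-t).choose (s₀-k) : ℕ) : ℝ) * F k := by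
        rw [← step2, ← step1]
    _ = ((s₀ : ℝ) / (Nat.factorial d : ℝ)) * ∑ k ∈ Finset.range (s₀+1),
          (-1:ℝ)^(s₀-k) * ((t.choose k * ((d-t).choose (s₀-k) *
            (((d-t)+k-1).factorial * (t-k).factorial)) : ℕ) : ℝ) := by
        rw [Finset.mul_sum]
        refine Finset.sum_congr rfl fun k hk => ?_
        rw [Finset.mem_range] at hk
        have hkt : k ≤ t := by omega
        have harg : d - (t - k) - 1 = (d - t) + k - 1 := by omega
        rw [hF]
        simp only
        rw [harg]
        push_cast
        ring
    _ = 0 := by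
        rw [sti_sum_zero t (d-t) s₀ hs h1 hse, mul_zero]
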